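/- Let $S_+, S_- \subseteq \mathbb{R}^n$ be finite strictly linearly separable sets, and suppose $A_+ \subseteq S_+$ and $A_- \subseteq S_-$ satisfy $A_+ \supseteq A_+^*$ and $A_- \supseteq A_-^*$. Then the cone generated by $\{(x,1): x \in A_+\} \cup \{(-y,-1): y \in A_-\}$ equals the cone generated by $\{(x,1): x \in S_+\} \cup \{(-y,-1): y \in S_-\}$; consequently, the sets of affine classifiers consistent with $(A_+, A_-)$ and with $(S_+, S_-)$ coincide. -/

import Mathlib

def InConeK (n : ℕ) (Sp Sm : Finset (Fin n → ℝ)) (v : (Fin n → ℝ) × ℝ) : Prop :=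
  ∃ lam gam : (Fin n → ℝ) → ℝ, (∀ x, 0 ≤ lam x) ∧ (∀ y, 0 ≤ gam y) ∧
    v = ∑ x ∈ Sp, lam x • ((x, (1 : ℝ)) : (Fin n → ℝ) × ℝ) +
        ∑ y ∈ Sm, gam y • ((-y, (-1 : ℝ)) : (Fin n → ℝ) × ℝ)

def CritPlus (n : ℕ) (Sp Sm : Finset (Fin n → ℝ)) (xs : Fin n → ℝ) : Prop :=
  xs ∈ Sp ∧ ∃ (c : Fin n → ℝ) (d : ℝ), (∑ i, c i * xs i) + d = 0 ∧
    (∀ x ∈ Sp, x ≠ xs → (∑ i, c i * x i) + d > 0) ∧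
    (∀ y ∈ Sm, (∑ i, c i * y i) + d < 0)

def CritMinus (n : ℕ) (Sp Sm : Finset (Fin n → ℝ)) (ys : Fin n → ℝ) : Prop :=
  ys ∈ Sm ∧ ∃ (c : Fin n → ℝ) (d : ℝ), (∑ i, c i * ys i) + d = 0 ∧
    (∀ y ∈ Sm, y ≠ ys → (∑ i, c i * y i) + d < 0) ∧
    (∀ x ∈ Sp, (∑ i, c i * x i) + d > 0)

/-- `(c,d)` is a consistent affine classifier for positives `A₊` and negatives `A₋`. -/
def Consistent (n : ℕ) (Ap Am : Finset (Fin n → ℝ)) (c : Fin n → ℝ) (d : ℝ) : Prop :=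
  (∀ x ∈ Ap, (∑ i, c i * x i) + d ≥ 0) ∧ (∀ y ∈ Am, (∑ i, c i * y i) + d ≤ 0)


namespace Stmt5Aux
open Finset


variable {n : ℕ}

abbrev V (n : ℕ) := (Fin n → ℝ) × ℝ

def pr (w v : V n) : ℝ := (∑ i, w.1 i * v.1 i) + w.2 * v.2

lemma pr_add_left (a b v : V n) : pr (a + b) v = pr a v + pr b v := by
  simp [pr, add_mul, Finset.sum_add_distrib]; ring

lemma pr_sub_left (a b v : V n) : pr (a - b) v = pr a v - pr b v := by
  simp [pr, sub_mul, Finset.sum_sub_distrib]; ring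

lemma pr_smul_left (t : ℝ) (a v : V n) : pr (t • a) v = t * pr a v := by
  simp [pr, Finset.mul_sum, mul_add, mul_assoc]

lemma pr_smul_right (t : ℝ) (a v : V n) : pr a (t • v) = t * pr a v := by
  simp [pr, Finset.mul_sum, mul_add]
  congr 1
  · apply Finset.sum_congr rfl; intro i _; ring
  · ring

lemma pr_comm (a v : V n) : pr a v = pr v a := by
  simp only [pr]
  congr 1
  · apply Finset.sum_congr rfl; intro i _; ring
  · ring

lemma pr_sub_right (a b v : V n) : pr v (a - b) = pr v a - pr v b := by
  rw [pr_comm, pr_sub_left, pr_comm a v, pr_comm b v]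

lemma pr_self_nonneg (v : V n) : 0 ≤ pr v v := by
  have : ∀ i ∈ (univ : Finset (Fin n)), 0 ≤ v.1 i * v.1 i := fun i _ => mul_self_nonneg _
  have := Finset.sum_nonneg this
  have h2 := mul_self_nonneg v.2
  simp only [pr]; linarith

lemma pr_self_pos {v : V n} (hv : v ≠ 0) : 0 < pr v v := by
  rcases lt_or_eq_of_le (pr_self_nonneg v) with h | h
  · exact h
  exfalso; apply hv
  have hsum : (∑ i, v.1 i * v.1 i) + v.2 * v.2 = 0 := by simpa [pr] using h.symm
  have h1 : ∀ i ∈ (univ : Finset (Fin n)), 0 ≤ v.1 i * v.1 i := fun i _ => mul_self_nonneg _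
  have hs : 0 ≤ ∑ i, v.1 i * v.1 i := Finset.sum_nonneg h1
  have h2 : 0 ≤ v.2 * v.2 := mul_self_nonneg _
  have hsz : ∑ i, v.1 i * v.1 i = 0 := by linarith
  have h2z : v.2 * v.2 = 0 := by linarith
  have := (Finset.sum_eq_zero_iff_of_nonneg h1).1 hsz
  ext i
  · have := this i (mem_univ i); exact mul_self_eq_zero.1 this
  · exact mul_self_eq_zero.1 h2z

/-- exposed point: if `m` has max self-pairing among a pair, it strictly separates. -/
lemma exposed {m m' : V n} (hne : m' ≠ m) (hle : pr m' m' ≤ pr m m) : pr m m' < pr m m := by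
  have h0 : 0 < pr (m - m') (m - m') := pr_self_pos (sub_ne_zero.2 (Ne.symm hne))
  have hexp : pr (m - m') (m - m') = pr m m - pr m m' - pr m' m + pr m' m' := by
    rw [pr_sub_left, pr_sub_right, pr_sub_right]
    ring
  have hcomm : pr m' m = pr m m' := pr_comm m' m
  linarith [hexp ▸ h0]

noncomputable def gens (Sp Sm : Finset (Fin n → ℝ)) : Finset (V n) :=
  Sp.image (fun x => ((x, (1 : ℝ)) : V n)) ∪ Sm.image (fun y => ((-y, (-1 : ℝ)) : V n))

lemma mem_gens {Sp Sm : Finset (Fin n → ℝ)} {g : V n} :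
    g ∈ gens Sp Sm ↔ (∃ x ∈ Sp, g = (x, (1:ℝ))) ∨ ∃ y ∈ Sm, g = (-y, (-1:ℝ)) := by
  simp [gens, eq_comm]

lemma gens_mono {Sp Sm Ap Am : Finset (Fin n → ℝ)} (hAp : Ap ⊆ Sp) (hAm : Am ⊆ Sm) :
    gens Ap Am ⊆ gens Sp Sm :=
  Finset.union_subset_union (Finset.image_subset_image hAp) (Finset.image_subset_image hAm)

lemma pr_plus (w : V n) (x : Fin n → ℝ) :
    pr w (x, (1:ℝ)) = (∑ i, w.1 i * x i) + w.2 := by simp [pr]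

lemma pr_minus (w : V n) (y : Fin n → ℝ) :
    pr w (-y, (-1:ℝ)) = -((∑ i, w.1 i * y i) + w.2) := by
  simp [pr, Finset.sum_neg_distrib]
  ring


lemma norm_eq_plus {a b : ℝ} (ha : 0 < a) (hb : 0 < b) {x x' : Fin n → ℝ}
    (h : a⁻¹ • ((x, (1:ℝ)) : V n) = b⁻¹ • ((x', (1:ℝ)) : V n)) : x = x' := by
  have h2 := congrArg Prod.snd h
  simp only [Prod.smul_snd, smul_eq_mul, mul_one] at h2
  have hab : a = b := inv_injective h2
  have h1 := congrArg Prod.fst h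
  simp only [Prod.smul_fst] at h1
  rw [hab] at h1
  exact smul_right_injective (Fin n → ℝ) (inv_ne_zero (ne_of_gt hb)) h1

lemma norm_eq_minus {a b : ℝ} (ha : 0 < a) (hb : 0 < b) {y y' : Fin n → ℝ}
    (h : a⁻¹ • ((-y, (-1:ℝ)) : V n) = b⁻¹ • ((-y', (-1:ℝ)) : V n)) : y = y' := by
  have h2 := congrArg Prod.snd h
  simp only [Prod.smul_snd, smul_eq_mul] at h2
  have hab : a = b := inv_injective (by linarith)
  have h1 := congrArg Prod.fst h
  simp only [Prod.smul_fst] at h1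
  rw [hab] at h1
  have := smul_right_injective (Fin n → ℝ) (inv_ne_zero (ne_of_gt hb)) h1
  exact neg_injective this

lemma norm_ne_mix {a b : ℝ} (ha : 0 < a) (hb : 0 < b) (x y : Fin n → ℝ) :
    a⁻¹ • ((x, (1:ℝ)) : V n) ≠ b⁻¹ • ((-y, (-1:ℝ)) : V n) := by
  intro h
  have h2 := congrArg Prod.snd h
  simp only [Prod.smul_snd, smul_eq_mul, mul_one] at h2
  have i1 := inv_pos.2 ha
  have i2 := inv_pos.2 hb
  nlinarith

lemma star {Sp Sm Ap Am : Finset (Fin n → ℝ)}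
    (hAp : Ap ⊆ Sp) (hAm : Am ⊆ Sm)
    (hApstar : ∀ x, CritPlus n Sp Sm x → x ∈ Ap)
    (hAmstar : ∀ y, CritMinus n Sp Sm y → y ∈ Am)
    (ws : V n) (hws : ∀ g ∈ gens Sp Sm, 0 < pr ws g)
    (w : V n) (hw : ∀ g ∈ gens Ap Am, 0 ≤ pr w g) :
    ∀ g ∈ gens Sp Sm, 0 ≤ pr w g := by
  by_contra hcon
  push_neg at hcon
  obtain ⟨g0, hg0, hg0neg⟩ := hcon
  classical
  set G := gens Sp Sm with hG
  have hGne : G.Nonempty := ⟨g0, hg0⟩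
  set r : V n → ℝ := fun g => pr w g / pr ws g with hrdef
  set μ : ℝ := G.inf' hGne r with hμdef
  have hμ_le : ∀ g ∈ G, μ ≤ r g := fun g hg => Finset.inf'_le r hg
  have hμ_neg : μ < 0 :=
    lt_of_le_of_lt (Finset.inf'_le r hg0) (div_neg_of_neg_of_pos hg0neg (hws _ hg0))
  set M : Finset (V n) := G.filter (fun g => r g = μ) with hMdef
  have hMne : M.Nonempty := by
    obtain ⟨b, hb, hbe⟩ := Finset.exists_mem_eq_inf' hGne r
    exact ⟨b, Finset.mem_filter.2 ⟨hb, hbe.symm⟩⟩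
  set nh : V n → V n := fun g => (pr ws g)⁻¹ • g with hnhdef
  obtain ⟨m, hmM, hmmax⟩ := M.exists_max_image (fun g => pr (nh g) (nh g)) hMne
  have hmG : m ∈ G := (Finset.mem_filter.1 hmM).1
  have hrm : r m = μ := (Finset.mem_filter.1 hmM).2
  set u0 : V n := nh m with hu0def
  set w1 : V n := w - μ • ws with hw1def
  set w2 : V n := (pr u0 u0) • ws - u0 with hw2def
  -- basic facts
  have hpr_w : ∀ g ∈ G, pr w g = r g * pr ws g := by
    intro g hg
    rw [hrdef]
    exact (div_mul_cancel₀ _ (ne_of_gt (hws g hg))).symm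
  have hw1g : ∀ g ∈ G, pr w1 g = (r g - μ) * pr ws g := by
    intro g hg
    rw [hw1def, pr_sub_left, pr_smul_left, hpr_w g hg]; ring
  have hw1_nonneg : ∀ g ∈ G, 0 ≤ pr w1 g := by
    intro g hg
    rw [hw1g g hg]
    exact mul_nonneg (by linarith [hμ_le g hg]) (le_of_lt (hws g hg))
  have hw1_pos : ∀ g ∈ G, g ∉ M → 0 < pr w1 g := by
    intro g hg hgM
    have hne : r g ≠ μ := fun h => hgM (Finset.mem_filter.2 ⟨hg, h⟩)
    rw [hw1g g hg]
    have : 0 < r g - μ := by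
      rcases lt_or_gt_of_ne hne with h|h
      · linarith [hμ_le g hg]
      · linarith
    exact mul_pos this (hws g hg)
  have hnh_pr : ∀ g ∈ G, pr u0 g = pr ws g * pr u0 (nh g) := by
    intro g hg
    simp only [hnhdef, pr_smul_right]
    rw [← mul_assoc, mul_inv_cancel₀ (ne_of_gt (hws g hg)), one_mul]
  have hw2g : ∀ g ∈ G, pr w2 g = pr ws g * (pr u0 u0 - pr u0 (nh g)) := by
    intro g hg
    rw [hw2def, pr_sub_left, pr_smul_left, hnh_pr g hg]; ring
  have hw1m : pr w1 m = 0 := by rw [hw1g m hmG, hrm]; ring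
  have hw2m : pr w2 m = 0 := by rw [hw2g m hmG, ← hu0def]; ring
  -- choose ε
  set a : V n → ℝ := fun g => pr w1 g with hadef
  set b : V n → ℝ := fun g => pr w2 g with hbdef
  set ε : ℝ := G.inf' hGne (fun g => if g ∈ M then 1 else a g / (1 + |b g|)) with hεdef
  have hε_pos : 0 < ε := by
    rw [hεdef]
    rw [Finset.lt_inf'_iff]
    intro g hg
    by_cases hgM : g ∈ M
    · simp [hgM]
    · simp only [hgM, if_false]
      exact div_pos (hw1_pos g hg hgM) (by positivity)
  set v : V n := w1 + ε • w2 with hvdef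
  have hvm : pr v m = 0 := by rw [hvdef, pr_add_left, pr_smul_left, hw1m, hw2m]; ring
  have key : ∀ g ∈ G, nh g ≠ u0 → 0 < pr v g := by
    intro g hg hne
    by_cases hgM : g ∈ M
    · have h1 : pr w1 g = 0 := by
        rw [hw1g g hg, (Finset.mem_filter.1 hgM).2]; ring
      have hle : pr (nh g) (nh g) ≤ pr u0 u0 := hmmax g hgM
      have h2 : pr u0 (nh g) < pr u0 u0 := exposed hne hle
      rw [hvdef, pr_add_left, pr_smul_left, h1, hw2g g hg]
      have := mul_pos (hws g hg) (by linarith : (0:ℝ) < pr u0 u0 - pr u0 (nh g))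
      nlinarith
    · have ha : 0 < a g := hw1_pos g hg hgM
      have hεle : ε ≤ a g / (1 + |b g|) := by
        have := Finset.inf'_le (fun g => if g ∈ M then 1 else a g / (1 + |b g|)) hg
        rw [if_neg hgM] at this
        exact le_trans (le_of_eq hεdef) this
      have habs : ε * |b g| < a g := by
        have h1 : 0 < 1 + |b g| := by positivity
        have h2 : ε * |b g| ≤ (a g / (1 + |b g|)) * |b g| :=
          mul_le_mul_of_nonneg_right hεle (abs_nonneg _)
        have h3 : (a g / (1 + |b g|)) * |b g| < a g := by
          rw [div_mul_eq_mul_div, div_lt_iff₀ h1]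
          nlinarith [abs_nonneg (b g)]
        linarith
      have hineq : -(ε * |b g|) ≤ ε * b g := by
        have := neg_abs_le (b g)
        nlinarith [hε_pos.le]
      rw [hvdef, pr_add_left, pr_smul_left]
      have : pr w1 g = a g := rfl
      rw [this]
      have : pr w2 g = b g := rfl
      rw [this]
      linarith
  -- m is not an A-generator
  have hmneg : pr w m < 0 := by
    rw [hpr_w m hmG, hrm]
    exact mul_neg_of_neg_of_pos hμ_neg (hws m hmG)
  have hmnotA : m ∉ gens Ap Am := fun h => absurd (hw m h) (not_le.2 hmneg)
  -- case analysis on m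
  have hm' := mem_gens.1 hmG
  rcases hm' with ⟨x0, hx0, hmx⟩ | ⟨y0, hy0, hmy⟩
  · -- m = (x0, 1)
    have hcrit : CritPlus n Sp Sm x0 := by
      refine ⟨hx0, v.1, v.2, ?_, ?_, ?_⟩
      · have := hvm
        rw [hmx, pr_plus] at this
        exact this
      · intro x hxSp hxne
        have hgG : ((x, (1:ℝ)) : V n) ∈ G := mem_gens.2 (Or.inl ⟨x, hxSp, rfl⟩)
        have hneq : nh ((x, (1:ℝ)) : V n) ≠ u0 := by
          intro heq
          rw [hu0def, hmx] at heq
          simp only [hnhdef] at heq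
          exact hxne (norm_eq_plus (hws _ hgG) (hws _ (hmx ▸ hmG)) heq)
        have := key _ hgG hneq
        rw [pr_plus] at this
        linarith
      · intro y hySm
        have hgG : ((-y, (-1:ℝ)) : V n) ∈ G := mem_gens.2 (Or.inr ⟨y, hySm, rfl⟩)
        have hneq : nh ((-y, (-1:ℝ)) : V n) ≠ u0 := by
          intro heq
          rw [hu0def, hmx] at heq
          simp only [hnhdef] at heq
          exact norm_ne_mix (hws _ (hmx ▸ hmG)) (hws _ hgG) x0 y heq.symm
        have := key _ hgG hneq
        rw [pr_minus] at this
        linarith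
    exact hmnotA (hmx ▸ mem_gens.2 (Or.inl ⟨x0, hApstar x0 hcrit, rfl⟩))
  · -- m = (-y0, -1)
    have hcrit : CritMinus n Sp Sm y0 := by
      refine ⟨hy0, v.1, v.2, ?_, ?_, ?_⟩
      · have := hvm
        rw [hmy, pr_minus] at this
        linarith
      · intro y hySm hyne
        have hgG : ((-y, (-1:ℝ)) : V n) ∈ G := mem_gens.2 (Or.inr ⟨y, hySm, rfl⟩)
        have hneq : nh ((-y, (-1:ℝ)) : V n) ≠ u0 := by
          intro heq
          rw [hu0def, hmy] at heq
          simp only [hnhdef] at heq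
          exact hyne (norm_eq_minus (hws _ hgG) (hws _ (hmy ▸ hmG)) heq)
        have := key _ hgG hneq
        rw [pr_minus] at this
        linarith
      · intro x hxSp
        have hgG : ((x, (1:ℝ)) : V n) ∈ G := mem_gens.2 (Or.inl ⟨x, hxSp, rfl⟩)
        have hneq : nh ((x, (1:ℝ)) : V n) ≠ u0 := by
          intro heq
          rw [hu0def, hmy] at heq
          simp only [hnhdef] at heq
          exact norm_ne_mix (hws _ hgG) (hws _ (hmy ▸ hmG)) x y0 heq
        have := key _ hgG hneq
        rw [pr_plus] at this
        linarith
    exact hmnotA (hmy ▸ mem_gens.2 (Or.inr ⟨y0, hAmstar y0 hcrit, rfl⟩))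


section Cone
variable {Sp Sm Ap Am : Finset (Fin n → ℝ)}

lemma cone_zero : InConeK n Ap Am 0 := by
  refine ⟨0, 0, fun _ => le_refl 0, fun _ => le_refl 0, ?_⟩
  simp

lemma cone_add {v v' : V n} (h : InConeK n Ap Am v) (h' : InConeK n Ap Am v') :
    InConeK n Ap Am (v + v') := by
  obtain ⟨l1, g1, hl1, hg1, rfl⟩ := h
  obtain ⟨l2, g2, hl2, hg2, rfl⟩ := h'
  refine ⟨l1 + l2, g1 + g2, fun x => add_nonneg (hl1 x) (hl2 x),
    fun y => add_nonneg (hg1 y) (hg2 y), ?_⟩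
  simp only [Pi.add_apply, add_smul, Finset.sum_add_distrib]
  abel

lemma cone_smul {v : V n} {t : ℝ} (ht : 0 ≤ t) (h : InConeK n Ap Am v) :
    InConeK n Ap Am (t • v) := by
  obtain ⟨l, g, hl, hg, rfl⟩ := h
  refine ⟨fun x => t * l x, fun y => t * g y, fun x => mul_nonneg ht (hl x),
    fun y => mul_nonneg ht (hg y), ?_⟩
  simp only [smul_add, Finset.smul_sum, smul_smul]

lemma cone_sum {ι : Type*} (s : Finset ι) (f : ι → V n)
    (h : ∀ i ∈ s, InConeK n Ap Am (f i)) : InConeK n Ap Am (∑ i ∈ s, f i) := by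
  classical
  induction s using Finset.induction_on with
  | empty => simpa using (cone_zero : InConeK n Ap Am 0)
  | insert a s' hni ih =>
    rw [Finset.sum_insert hni]
    exact cone_add (h a (Finset.mem_insert_self a s'))
      (ih fun i hi => h i (Finset.mem_insert_of_mem hi))

lemma cone_gen {g : V n} (hg : g ∈ gens Ap Am) : InConeK n Ap Am g := by
  classical
  rcases mem_gens.1 hg with ⟨x, hx, rfl⟩ | ⟨y, hy, rfl⟩
  · refine ⟨fun x' => if x' = x then 1 else 0, 0, ?_, fun _ => le_refl 0, ?_⟩
    · intro x'; simp only []; split <;> norm_num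
    · simp only [Pi.zero_apply, zero_smul, Finset.sum_const_zero, add_zero]
      rw [Finset.sum_eq_single x]
      · simp
      · intro b _ hb; simp [hb]
      · intro h; exact absurd hx h
  · refine ⟨0, fun y' => if y' = y then 1 else 0, fun _ => le_refl 0, ?_, ?_⟩
    · intro y'; simp only []; split <;> norm_num
    · simp only [Pi.zero_apply, zero_smul, Finset.sum_const_zero, zero_add]
      rw [Finset.sum_eq_single y]
      · simp
      · intro b _ hb; simp [hb]
      · intro h; exact absurd hy h

lemma cone_mono (hAp : Ap ⊆ Sp) (hAm : Am ⊆ Sm) {v : V n} (h : InConeK n Ap Am v) :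
    InConeK n Sp Sm v := by
  classical
  obtain ⟨l, g, hl, hg, rfl⟩ := h
  refine ⟨fun x => if x ∈ Ap then l x else 0, fun y => if y ∈ Am then g y else 0,
    ?_, ?_, ?_⟩
  · intro x; simp only []; split; exacts [hl x, le_refl 0]
  · intro y; simp only []; split; exacts [hg y, le_refl 0]
  · congr 1
    · rw [← Finset.sum_subset hAp]
      · apply Finset.sum_congr rfl; intro x hx; simp only []; rw [if_pos hx]
      · intro x _ hx; simp only []; rw [if_neg hx, zero_smul]
    · rw [← Finset.sum_subset hAm]
      · apply Finset.sum_congr rfl; intro y hy; simp only []; rw [if_pos hy]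
      · intro y _ hy; simp only []; rw [if_neg hy, zero_smul]

/-- A continuous linear functional is represented by `pr`. -/
lemma pr_repr (f : V n →L[ℝ] ℝ) (v : V n) :
    pr ((fun i => f (Pi.single i 1, 0), f (0, 1)) : V n) v = f v := by
  classical
  have hterm : ∀ i : Fin n, v.1 i • ((Pi.single i 1 : Fin n → ℝ), (0:ℝ))
      = ((Pi.single i (v.1 i) : Fin n → ℝ), (0:ℝ)) := by
    intro i
    have : v.1 i • (Pi.single i 1 : Fin n → ℝ) = Pi.single i (v.1 i) := by
      ext j
      by_cases hij : i = j
      · subst hij; simp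
      · simp [Pi.single_eq_of_ne' hij]
    rw [Prod.smul_mk, this, smul_zero]
  have h1 : (∑ i, v.1 i • ((Pi.single i 1 : Fin n → ℝ), (0:ℝ)))
      = ((v.1 : Fin n → ℝ), (0:ℝ)) := by
    simp only [hterm]
    refine Prod.ext ?_ ?_
    · rw [Prod.fst_sum]
      exact Finset.univ_sum_single v.1
    · rw [Prod.snd_sum]
      simp
  have hv : v = (∑ i, v.1 i • ((Pi.single i 1 : Fin n → ℝ), (0:ℝ)))
      + v.2 • (((0 : Fin n → ℝ)), (1:ℝ)) := by
    rw [h1]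
    refine Prod.ext ?_ ?_ <;> simp
  conv_rhs => rw [hv]
  rw [map_add, map_sum, map_smul]
  simp only [map_smul, smul_eq_mul]
  simp only [pr]
  congr 1
  · exact Finset.sum_congr rfl fun i _ => mul_comm _ _
  · exact mul_comm _ _

end Cone
/-- separator from hsep gives positive pairing with all generators -/
lemma ws_pos {Sp Sm : Finset (Fin n → ℝ)} {c : Fin n → ℝ} {d : ℝ}
    (h1 : ∀ x ∈ Sp, (∑ i, c i * x i) + d > 0) (h2 : ∀ y ∈ Sm, (∑ i, c i * y i) + d < 0) :
    ∀ g ∈ gens Sp Sm, 0 < pr ((c, d) : V n) g := by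
  intro g hg
  rcases mem_gens.1 hg with ⟨x, hx, rfl⟩ | ⟨y, hy, rfl⟩
  · rw [pr_plus]; exact h1 x hx
  · rw [pr_minus]; linarith [h2 y hy]

lemma consistent_iff {Ap Am : Finset (Fin n → ℝ)} (c : Fin n → ℝ) (d : ℝ) :
    Consistent n Ap Am c d ↔ ∀ g ∈ gens Ap Am, 0 ≤ pr ((c, d) : V n) g := by
  constructor
  · rintro ⟨h1, h2⟩ g hg
    rcases mem_gens.1 hg with ⟨x, hx, rfl⟩ | ⟨y, hy, rfl⟩
    · rw [pr_plus]; exact h1 x hx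
    · rw [pr_minus]; linarith [h2 y hy]
  · intro h
    constructor
    · intro x hx
      have := h _ (mem_gens.2 (Or.inl ⟨x, hx, rfl⟩))
      rw [pr_plus] at this; exact this
    · intro y hy
      have := h _ (mem_gens.2 (Or.inr ⟨y, hy, rfl⟩))
      rw [pr_minus] at this; linarith

/-- The hard direction: every generator of the big cone is in the small cone. -/
lemma cone_gens_mem {Sp Sm Ap Am : Finset (Fin n → ℝ)}
    (hAp : Ap ⊆ Sp) (hAm : Am ⊆ Sm)
    (hApstar : ∀ x, CritPlus n Sp Sm x → x ∈ Ap)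
    (hAmstar : ∀ y, CritMinus n Sp Sm y → y ∈ Am)
    (ws : V n) (hws : ∀ g ∈ gens Sp Sm, 0 < pr ws g) :
    ∀ g ∈ gens Sp Sm, InConeK n Ap Am g := by
  classical
  intro g0 hg0
  by_contra hno
  set GA := gens Ap Am with hGA
  have hGAsub : GA ⊆ gens Sp Sm := gens_mono hAp hAm
  set nh : V n → V n := fun g => (pr ws g)⁻¹ • g with hnh
  set Q : Set (V n) := convexHull ℝ (↑(GA.image nh) : Set (V n)) with hQ
  -- if nh g0 ∈ Q then g0 ∈ cone
  have hQnotMem : nh g0 ∉ Q := by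
    intro hmem
    apply hno
    rw [hQ] at hmem
    rw [Finset.mem_convexHull'] at hmem
    obtain ⟨wt, hwt0, hwt1, hsum⟩ := hmem
    have hg0pos : 0 < pr ws g0 := hws g0 hg0
    have hg0eq : g0 = pr ws g0 • nh g0 := by
      rw [hnh]
      simp only
      rw [smul_inv_smul₀ (ne_of_gt hg0pos)]
    rw [hg0eq, ← hsum, Finset.smul_sum]
    apply cone_sum
    intro h hh
    rw [smul_smul]
    obtain ⟨g, hgGA, rfl⟩ := Finset.mem_image.1 hh
    have : InConeK n Ap Am g := cone_gen hgGA
    have hg' : InConeK n Ap Am (nh g) := by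
      rw [hnh]
      exact cone_smul (le_of_lt (inv_pos.2 (hws g (hGAsub hgGA)))) this
    exact cone_smul (mul_nonneg (le_of_lt hg0pos) (hwt0 _ hh)) hg'
  -- separate
  have hQconv : Convex ℝ Q := convex_convexHull ℝ _
  have hQclosed : IsClosed Q := (Set.Finite.isClosed_convexHull (𝕜 := ℝ) (Finset.finite_toSet _))
  obtain ⟨f, u, hfu, hub⟩ := geometric_hahn_banach_point_closed hQconv hQclosed hQnotMem
  set wf : V n := ((fun i => f (Pi.single i 1, 0), f (0, 1)) : V n) with hwf
  set w : V n := wf - u • ws with hwdef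
  have hprw : ∀ g : V n, pr w g = f g - u * pr ws g := by
    intro g
    rw [hwdef, pr_sub_left, pr_smul_left, hwf, pr_repr]
  have hfsc : ∀ g ∈ gens Sp Sm, f g = pr ws g * f (nh g) := by
    intro g hg
    have : g = pr ws g • nh g := by
      rw [hnh]; simp only
      rw [smul_inv_smul₀ (ne_of_gt (hws g hg))]
    conv_lhs => rw [this]
    rw [map_smul, smul_eq_mul]
  have hwGA : ∀ g ∈ GA, 0 ≤ pr w g := by
    intro g hg
    have hnhQ : nh g ∈ Q := by
      rw [hQ]
      apply subset_convexHull
      exact Finset.mem_coe.2 (Finset.mem_image_of_mem nh hg)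
    have := hub _ hnhQ
    rw [hprw, hfsc g (hGAsub hg)]
    have hp := hws g (hGAsub hg)
    nlinarith
  have := star hAp hAm hApstar hAmstar ws hws w hwGA g0 hg0
  rw [hprw, hfsc g0 hg0] at this
  have hp := hws g0 hg0
  nlinarith


end Stmt5Aux

/-- if `A₊ ⊇ A₊*` and `A₋ ⊇ A₋*`, then `K_{A₊,A₋} = K_{S₊,S₋}` and the
consistent affine classifiers for `(A₊,A₋)` and `(S₊,S₋)` coincide. -/
theorem stmt5 (n : ℕ) (Sp Sm Ap Am : Finset (Fin n → ℝ))
    (hsep : ∃ (c : Fin n → ℝ) (d : ℝ),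
      (∀ x ∈ Sp, (∑ i, c i * x i) + d > 0) ∧ (∀ y ∈ Sm, (∑ i, c i * y i) + d < 0))
    (hAp : Ap ⊆ Sp) (hAm : Am ⊆ Sm)
    (hApstar : ∀ x, CritPlus n Sp Sm x → x ∈ Ap)
    (hAmstar : ∀ y, CritMinus n Sp Sm y → y ∈ Am) :
    (∀ v, InConeK n Ap Am v ↔ InConeK n Sp Sm v) ∧
      (∀ (c : Fin n → ℝ) (d : ℝ), Consistent n Ap Am c d ↔ Consistent n Sp Sm c d) := by
  open Stmt5Aux in
  obtain ⟨cs, ds, hs1, hs2⟩ := hsep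
  have hws := Stmt5Aux.ws_pos hs1 hs2
  have hgens := Stmt5Aux.cone_gens_mem hAp hAm hApstar hAmstar ((cs, ds) : Stmt5Aux.V n) hws
  constructor
  · intro v
    constructor
    · exact Stmt5Aux.cone_mono hAp hAm
    · rintro ⟨lam, gam, hlam, hgam, rfl⟩
      apply Stmt5Aux.cone_add
      · apply Stmt5Aux.cone_sum
        intro x hx
        exact Stmt5Aux.cone_smul (hlam x)
          (hgens _ (Stmt5Aux.mem_gens.2 (Or.inl ⟨x, hx, rfl⟩)))
      · apply Stmt5Aux.cone_sum
        intro y hy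
        exact Stmt5Aux.cone_smul (hgam y)
          (hgens _ (Stmt5Aux.mem_gens.2 (Or.inr ⟨y, hy, rfl⟩)))
  · intro c d
    rw [Stmt5Aux.consistent_iff, Stmt5Aux.consistent_iff]
    constructor
    · intro h
      exact Stmt5Aux.star hAp hAm hApstar hAmstar _ hws _ h
    · intro h g hg
      exact h g (Stmt5Aux.gens_mono hAp hAm hg)
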